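/- Degenerate-case reduction of the MI2 influence function: suppose the four missingness indicators satisfy δᵢ₁ + δᵢ₂ + δᵢ₃ + δᵢ₄ = 1 with δᵢ₂ = δᵢ₃ = 0, and the selection probabilities satisfy π₂(Yᵢ,Vᵢ) = π₃(Yᵢ,Vᵢ) = 0, π₄(Yᵢ,Vᵢ) = 1 − π₁(Yᵢ,Vᵢ), and π₁(Yᵢ,Vᵢ) ≠ 0. Then Ψᵢ(β,πᵢ) = [δᵢ₁/π₁(Yᵢ,Vᵢ)] Sᵢ(β) + [1 − δᵢ₁/π₁(Yᵢ,Vᵢ)] S*ᵢ(β), i.e. the MI2 influence function reduces exactly to the augmented inverse-probability-weighted form of Wang and Chen (2001) when the two covariate blocks can only be missing simultaneously. -/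

import Mathlib

/-- degenerate-case reduction of the MI2 influence function. If
`δ₂ = δ₃ = 0`, `π₂ = π₃ = 0`, `π₄ = 1 − π₁` and `π₁ ≠ 0`, then
`Ψ = δ₁ S + (δ₂+δ₃+δ₄) S* + (S − S*) η` with
`η = (δ₁+δ₃)π₂/(π₁+π₃) + (δ₁+δ₂)π₃/(π₁+π₂) + δ₁π₄/π₁`
reduces exactly to the augmented IPW form `(δ₁/π₁) S + (1 − δ₁/π₁) S*` of Wang and Chen
(2001). -/
theorem MI2_influence_degenerate {V : Type*} [AddCommGroup V] [Module ℝ V]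
    (S Sstar : V) (δ1 δ2 δ3 δ4 : ℝ) (π1 π2 π3 π4 : ℝ)
    (hδsum : δ1 + δ2 + δ3 + δ4 = 1) (hδ2 : δ2 = 0) (hδ3 : δ3 = 0)
    (hπ2 : π2 = 0) (hπ3 : π3 = 0) (hπ4 : π4 = 1 - π1) (hπ1 : π1 ≠ 0) :
    δ1 • S + (δ2 + δ3 + δ4) • Sstar
        + ((δ1 + δ3) * π2 / (π1 + π3) + (δ1 + δ2) * π3 / (π1 + π2) + δ1 * π4 / π1) •
            (S - Sstar)
      = (δ1 / π1) • S + (1 - δ1 / π1) • Sstar := by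
  subst hδ2 hδ3 hπ2 hπ3 hπ4
  have hδ4 : δ4 = 1 - δ1 := by linarith
  subst hδ4
  rw [smul_sub]
  have h1 : δ1 * (1 - π1) / π1 = δ1 / π1 - δ1 := by field_simp
  rw [show (δ1 + 0) * 0 / (π1 + 0) + (δ1 + 0) * 0 / (π1 + 0) + δ1 * (1 - π1) / π1
      = δ1 / π1 - δ1 by rw [h1]; ring]
  module
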